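/- arXiv:1404.3996 — 3 statements merged into one kernel-verified Lean document; each statement's English description precedes it below -/
import Mathlib

section
/- The function v ↦ eb(v) is strictly increasing on (0, ∞). -/
/-- The effective bandwidth `eb` of a single exponential ON–OFF source is strictly
increasing on `(0, ∞)`. -/
theorem effective_bandwidth_strictMonoOn
    (R α β : ℝ) (hR : 0 < R) (hα : 0 < α) (hβ : 0 < β)
    (eb : ℝ → ℝ)
    (heb : ∀ v, 0 < v → eb v =
      (R * v - α - β + Real.sqrt ((R * v - α - β) ^ 2 + 4 * β * R * v)) / (2 * v)) :
    StrictMonoOn eb (Set.Ioi 0) := by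
  intro u hu v hv huv
  simp only [Set.mem_Ioi] at hu hv
  rw [heb u hu, heb v hv]
  set Xu := R * u - α - β with hXu
  set Xv := R * v - α - β with hXv
  have hDu : (0:ℝ) < Xu ^ 2 + 4 * β * R * u := by positivity
  have hDv : (0:ℝ) < Xv ^ 2 + 4 * β * R * v := by positivity
  set su := Real.sqrt (Xu ^ 2 + 4 * β * R * u) with hsu
  set sv := Real.sqrt (Xv ^ 2 + 4 * β * R * v) with hsv
  have hsu2 : su ^ 2 = Xu ^ 2 + 4 * β * R * u := Real.sq_sqrt hDu.le
  have hsv2 : sv ^ 2 = Xv ^ 2 + 4 * β * R * v := Real.sq_sqrt hDv.le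
  have hsu0 : 0 < su := Real.sqrt_pos.mpr hDu
  have hsv0 : 0 < sv := Real.sqrt_pos.mpr hDv
  set e := (Xu + su) / (2 * u) with he
  have h2u : 2 * u * e = Xu + su := by
    rw [he]; field_simp [hu.ne']
  -- e satisfies the quadratic u e² - Xu e - βR = 0
  have h4 : (4 * u) * (u * e ^ 2 - Xu * e - β * R) = 0 := by
    linear_combination (2 * u * e - Xu + su) * h2u + hsu2
  have hquad : u * e ^ 2 - Xu * e - β * R = 0 :=
    (mul_eq_zero.mp h4).resolve_left (by positivity)
  -- su > -Xu, hence e > 0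
  have hXusu : -Xu < su := by
    nlinarith [hsu2, hsu0, mul_pos (mul_pos hβ hR) hu]
  have hepos : 0 < e := div_pos (by linarith) (by positivity)
  -- e < R
  have heR : e < R := by
    by_contra h
    push_neg at h
    have h1 : 0 ≤ u * e * (e - R) := by
      have : 0 ≤ e - R := by linarith
      positivity
    have h2 : u * e * (e - R) = β * R - (α + β) * e := by
      rw [hXu] at hquad; linear_combination hquad
    nlinarith [mul_le_mul_of_nonneg_left h (le_of_lt (by linarith : (0:ℝ) < α + β))]
  -- key: e is strictly below the larger root of the quadratic at v
  have hkey : v * e ^ 2 - Xv * e - β * R < 0 := by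
    have hfac : v * e ^ 2 - Xv * e - β * R = (v - u) * e * (e - R) := by
      rw [hXu] at hquad; rw [hXv]; linear_combination hquad
    rw [hfac]
    have h1 : 0 < (v - u) * e := by
      apply mul_pos (by linarith) hepos
    nlinarith [h1]
  rw [lt_div_iff₀ (by positivity : (0:ℝ) < 2 * v)]
  rcases le_or_gt (e * (2 * v) - Xv) 0 with hc | hc
  · linarith
  · have hsq : (e * (2 * v) - Xv) ^ 2 < sv ^ 2 := by
      nlinarith [hkey, hv]
    have := lt_of_pow_lt_pow_left₀ 2 hsv0.le hsq
    linarith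
end

section
/- Suppose N·R₂β₂/(α₂+β₂) < c. Then the set S = {v > 0 : g(v) + N·eb(v) = c} is nonempty and has a least element η > 0 (the minimum positive solution of g(η) + N·eb(η) = c exists). -/
set_option maxHeartbeats 1600000


/-- Under the stability condition `N R₂ β₂/(α₂+β₂) < c`, the set
`S = {v > 0 : g v + N · eb v = c}` is nonempty and has a least element `η > 0`. -/
theorem exists_min_positive_solution_eta
    (N : ℕ) (hN : 1 ≤ N) (R₂ α₂ β₂ c : ℝ)
    (hR : 0 < R₂) (hα : 0 < α₂) (hβ : 0 < β₂) (hc : 0 < c)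
    (eb : ℝ → ℝ)
    (heb : ∀ v, 0 < v → eb v =
      (R₂ * v - α₂ - β₂ + Real.sqrt ((R₂ * v - α₂ - β₂) ^ 2 + 4 * β₂ * R₂ * v)) / (2 * v))
    (g : ℝ → ℝ)
    (hgcont : ContinuousOn g (Set.Ioi 0))
    (hgmono : MonotoneOn g (Set.Ioi 0))
    (hgbd : ∀ v, 0 < v → 0 ≤ g v ∧ g v ≤ c)
    (hg0 : Filter.Tendsto g (nhdsWithin 0 (Set.Ioi 0)) (nhds 0))
    (hginf : Filter.Tendsto g Filter.atTop (nhds c))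
    (hstab : N * R₂ * β₂ / (α₂ + β₂) < c) :
    ({v : ℝ | 0 < v ∧ g v + N * eb v = c}).Nonempty ∧
    ∃ η, IsLeast {v : ℝ | 0 < v ∧ g v + N * eb v = c} η ∧ 0 < η := by
  -- Auxiliary functions
  set q : ℝ → ℝ := fun v => (R₂ * v - α₂ - β₂) ^ 2 + 4 * β₂ * R₂ * v with hqdef
  set D : ℝ → ℝ := fun v => Real.sqrt (q v) - (R₂ * v - α₂ - β₂) with hDdef
  set E : ℝ → ℝ := fun v => 2 * β₂ * R₂ / D v with hEdef
  have hq : ∀ v, 0 ≤ v → 0 ≤ q v := by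
    intro v hv; simp only [hqdef]; nlinarith [sq_nonneg (R₂ * v - α₂ - β₂), mul_nonneg (mul_nonneg (mul_nonneg (by norm_num : (0:ℝ) ≤ 4) hβ.le) hR.le) hv]
  have hsq : ∀ v, 0 ≤ v → (Real.sqrt (q v)) ^ 2 = q v := fun v hv => Real.sq_sqrt (hq v hv)
  have hD : ∀ v, 0 ≤ v → 0 < D v := by
    intro v hv
    have hs0 : 0 ≤ Real.sqrt (q v) := Real.sqrt_nonneg _
    have hs2 := hsq v hv
    simp only [hqdef] at hs2
    rcases lt_or_ge (R₂ * v - α₂ - β₂) 0 with h | h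
    · simp only [hDdef]; linarith
    · have hv' : 0 < v := by nlinarith
      simp only [hDdef, hqdef]; nlinarith
  have hEeb : ∀ v, 0 < v → eb v = E v := by
    intro v hv
    rw [heb v hv]
    have hDv := hD v hv.le
    have hs2 := hsq v hv.le
    simp only [hEdef]
    rw [div_eq_div_iff (by positivity) hDv.ne']
    simp only [hDdef, hqdef] at *
    nlinarith
  have hDcont : Continuous D := by
    simp only [hDdef, hqdef]
    exact (Real.continuous_sqrt.comp (by continuity)).sub (by continuity)
  have hEcont : ContinuousOn E (Set.Ici 0) :=
    continuousOn_const.div hDcont.continuousOn (fun v hv => (hD v hv).ne')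
  have hE0 : E 0 = β₂ * R₂ / (α₂ + β₂) := by
    have hq0 : q 0 = (α₂ + β₂) ^ 2 := by simp only [hqdef]; ring
    have : Real.sqrt (q 0) = α₂ + β₂ := by
      rw [hq0, Real.sqrt_sq (by positivity)]
    simp only [hEdef, hDdef, this]
    rw [div_eq_div_iff (by nlinarith) (by positivity)]
    ring
  have hEtendsto : Filter.Tendsto E (nhdsWithin 0 (Set.Ioi 0)) (nhds (E 0)) :=
    ((hEcont 0 Set.self_mem_Ici).tendsto).mono_left
      (nhdsWithin_mono _ Set.Ioi_subset_Ici_self)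
  -- stability gap
  set m : ℝ := (N : ℝ) * (β₂ * R₂ / (α₂ + β₂)) with hmdef
  have hm : m < c := by
    rw [hmdef]
    have : (N : ℝ) * (β₂ * R₂ / (α₂ + β₂)) = N * R₂ * β₂ / (α₂ + β₂) := by ring
    rw [this]; exact hstab
  have hgap : 0 < (c - m) / 2 := by linarith
  -- low side: eventually F v < c near 0
  have ev1 : ∀ᶠ v in nhdsWithin 0 (Set.Ioi 0), g v < (c - m) / 2 :=
    hg0.eventually_lt_const hgap
  have ev2 : ∀ᶠ v in nhdsWithin 0 (Set.Ioi 0), (N : ℝ) * E v < m + (c - m) / 2 := by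
    have h : Filter.Tendsto (fun v => (N : ℝ) * E v) (nhdsWithin 0 (Set.Ioi 0))
        (nhds ((N : ℝ) * E 0)) := hEtendsto.const_mul _
    refine h.eventually_lt_const ?_
    rw [hE0, ← hmdef]; linarith
  have ev : ∀ᶠ v in nhdsWithin 0 (Set.Ioi 0), g v + (N : ℝ) * E v < c := by
    filter_upwards [ev1, ev2] with v h1 h2; linarith
  obtain ⟨δ, hδmem, hδsub⟩ := mem_nhdsGT_iff_exists_Ioo_subset.mp ev
  have hδ0 : (0 : ℝ) < δ := hδmem
  set a : ℝ := δ / 2 with hadef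
  have ha0 : 0 < a := by positivity
  have haδ : a < δ := by rw [hadef]; linarith
  have hFa : g a + (N : ℝ) * E a < c := hδsub ⟨ha0, haδ⟩
  -- high side
  obtain ⟨v₁, hv₁⟩ := Filter.eventually_atTop.mp
    (hginf.eventually_const_lt (show c - (N : ℝ) * R₂ / 2 < c by
      have hN1 : (1 : ℝ) ≤ (N : ℝ) := by exact_mod_cast hN
      nlinarith))
  set b : ℝ := max a (max v₁ (2 * (α₂ + β₂) / R₂)) with hbdef
  have hab : a ≤ b := le_max_left _ _
  have hb0 : 0 < b := lt_of_lt_of_le ha0 hab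
  have hbv₁ : v₁ ≤ b := le_trans (le_max_left _ _) (le_max_right _ _)
  have hbR : 2 * (α₂ + β₂) / R₂ ≤ b := le_trans (le_max_right _ _) (le_max_right _ _)
  have hbR' : 2 * (α₂ + β₂) ≤ R₂ * b := by
    rw [div_le_iff₀ hR] at hbR; linarith [hbR]
  have hAb : 0 < R₂ * b - α₂ - β₂ := by linarith
  have hEb : R₂ / 2 ≤ E b := by
    set s : ℝ := Real.sqrt (q b) with hsdef
    have hs0 : 0 ≤ s := Real.sqrt_nonneg _
    have hs2 : s ^ 2 = (R₂ * b - α₂ - β₂) ^ 2 + 4 * β₂ * R₂ * b := by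
      rw [hsdef]; simpa only [hqdef] using hsq b hb0.le
    have hDb : 0 < D b := hD b hb0.le
    have key : s * (R₂ * b - α₂ - β₂) ≤ (R₂ * b - α₂ - β₂) ^ 2 + 2 * β₂ * R₂ * b := by
      nlinarith [sq_nonneg (β₂ * R₂ * b), mul_nonneg hs0 hAb.le,
        sq_nonneg ((R₂ * b - α₂ - β₂) ^ 2 + 2 * β₂ * R₂ * b - s * (R₂ * b - α₂ - β₂))]
    have hADb : (R₂ * b - α₂ - β₂) * D b ≤ 2 * β₂ * R₂ * b := by
      simp only [hDdef, ← hsdef]; nlinarith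
    have hAhalf : R₂ * b / 2 ≤ R₂ * b - α₂ - β₂ := by nlinarith
    have hDb4 : D b ≤ 4 * β₂ := by
      nlinarith [le_trans (mul_le_mul_of_nonneg_right hAhalf hDb.le) hADb, mul_pos hR hb0]
    simp only [hEdef]
    rw [le_div_iff₀ hDb]
    have hfin : R₂ / 2 * D b ≤ R₂ / 2 * (4 * β₂) :=
      mul_le_mul_of_nonneg_left hDb4 (by positivity)
    linarith
  have hFb : c < g b + (N : ℝ) * E b := by
    have h1 : c - (N : ℝ) * R₂ / 2 < g b := hv₁ b hbv₁
    have hN1 : (1 : ℝ) ≤ (N : ℝ) := by exact_mod_cast hN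
    nlinarith
  -- IVT
  have hIcc : Set.Icc a b ⊆ Set.Ioi 0 := fun v hv => lt_of_lt_of_le ha0 hv.1
  have hFcont : ContinuousOn (fun v => g v + (N : ℝ) * E v) (Set.Icc a b) := by
    refine (hgcont.mono hIcc).add (continuousOn_const.mul (hEcont.mono ?_))
    exact fun v hv => (le_of_lt (hIcc hv) : (0:ℝ) ≤ v)
  have hmem : c ∈ Set.Icc (g a + (N : ℝ) * E a) (g b + (N : ℝ) * E b) :=
    ⟨hFa.le, hFb.le⟩
  obtain ⟨x, hx, hxc⟩ := intermediate_value_Icc hab hFcont hmem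
  have hx0 : 0 < x := lt_of_lt_of_le ha0 hx.1
  -- the solution set
  have hSeq : {v : ℝ | 0 < v ∧ g v + N * eb v = c}
      = {v : ℝ | δ ≤ v ∧ g v + (N : ℝ) * E v = c} := by
    ext v
    simp only [Set.mem_setOf_eq]
    constructor
    · rintro ⟨hv0, hveq⟩
      rw [hEeb v hv0] at hveq
      refine ⟨?_, hveq⟩
      by_contra h
      push_neg at h
      exact absurd hveq (ne_of_lt (hδsub ⟨hv0, h⟩))
    · rintro ⟨hvδ, hveq⟩
      have hv0 : 0 < v := lt_of_lt_of_le hδ0 hvδ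
      exact ⟨hv0, by rw [hEeb v hv0]; exact hveq⟩
  have hxS : x ∈ {v : ℝ | 0 < v ∧ g v + N * eb v = c} := by
    exact ⟨hx0, by rw [hEeb x hx0]; exact hxc⟩
  have hne : ({v : ℝ | 0 < v ∧ g v + N * eb v = c}).Nonempty := ⟨x, hxS⟩
  refine ⟨hne, ?_⟩
  have hclosed : IsClosed {v : ℝ | δ ≤ v ∧ g v + (N : ℝ) * E v = c} := by
    have : {v : ℝ | δ ≤ v ∧ g v + (N : ℝ) * E v = c}
        = Set.Ici δ ∩ (fun v => g v + (N : ℝ) * E v) ⁻¹' {c} := by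
      ext v; simp [Set.mem_setOf_eq, Set.mem_Ici]
    rw [this]
    refine ContinuousOn.preimage_isClosed_of_isClosed ?_ isClosed_Ici isClosed_singleton
    refine (hgcont.mono ?_).add (continuousOn_const.mul (hEcont.mono ?_))
    · exact fun v hv => lt_of_lt_of_le hδ0 hv
    · exact fun v hv => le_of_lt (lt_of_lt_of_le hδ0 hv)
  have hbdd' : BddBelow {v : ℝ | δ ≤ v ∧ g v + (N : ℝ) * E v = c} :=
    ⟨δ, fun y hy => hy.1⟩
  have hbdd : BddBelow {v : ℝ | 0 < v ∧ g v + N * eb v = c} := by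
    rw [hSeq]; exact hbdd'
  have hne' : ({v : ℝ | δ ≤ v ∧ g v + (N : ℝ) * E v = c}).Nonempty := by
    rw [← hSeq]; exact hne
  have hInf : sInf {v : ℝ | 0 < v ∧ g v + N * eb v = c}
      ∈ {v : ℝ | 0 < v ∧ g v + N * eb v = c} := by
    rw [hSeq]
    exact hclosed.csInf_mem hne' hbdd'
  refine ⟨_, ⟨hInf, fun y hy => csInf_le hbdd hy⟩, hInf.1⟩
end

section
/- If the failure rate r(x) = G′(x)/(p − G(x)) is nondecreasing on [0,∞), then the function f(x) = (∫_x^∞ e^{θy} G′(y) dy) / (e^{θx}·(p − G(x))) is nonincreasing on [0,∞); if r is nonincreasing, then f is nondecreasing. Consequently, in the increasing-failure-rate case sup_x f(x) = f(0) and in the decreasing-failure-rate case inf_x f(x) = f(0). -/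
open MeasureTheory

section IfrDfrAux
open Set Filter

lemma aux_G'_nonneg {G G' : ℝ → ℝ}
    (hderiv : ∀ x ∈ Ici (0:ℝ), HasDerivAt G (G' x) x)
    (hmono : MonotoneOn G (Ici 0)) {x : ℝ} (hx : 0 ≤ x) : 0 ≤ G' x := by
  have h := ((hderiv x hx).hasDerivWithinAt (s := Ici x))
  rw [hasDerivWithinAt_iff_tendsto_slope, Set.Ici_sdiff_left] at h
  refine ge_of_tendsto h ?_
  filter_upwards [self_mem_nhdsWithin] with y hy
  have hxy : x < y := hy
  have hG : G x ≤ G y := hmono hx (hx.trans hxy.le) hxy.le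
  have : 0 ≤ (G y - G x) / (y - x) := div_nonneg (by linarith) (by linarith)
  simpa [slope_def_field] using this

lemma aux_rcont {p : ℝ} {G G' : ℝ → ℝ}
    (hderiv : ∀ x ∈ Ici (0:ℝ), HasDerivAt G (G' x) x)
    (hG'cont : ContinuousOn G' (Ici 0))
    (hGlt : ∀ x ∈ Ici (0:ℝ), G x < p) :
    ContinuousOn (fun t => G' t / (p - G t)) (Ici 0) := by
  have hGcont : ContinuousOn G (Ici 0) := fun t ht =>
    (hderiv t ht).continuousAt.continuousWithinAt
  exact hG'cont.div (continuousOn_const.sub hGcont)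
    (fun t ht => sub_ne_zero.2 (ne_of_gt (hGlt t ht)))

lemma aux_surv {p : ℝ} {G G' : ℝ → ℝ}
    (hderiv : ∀ x ∈ Ici (0:ℝ), HasDerivAt G (G' x) x)
    (hG'cont : ContinuousOn G' (Ici 0))
    (hGlt : ∀ x ∈ Ici (0:ℝ), G x < p)
    {x y : ℝ} (hx : 0 ≤ x) (hxy : x ≤ y) :
    p - G y = (p - G x) * Real.exp (-(∫ t in x..y, G' t / (p - G t))) := by
  have hsub : Set.uIcc x y ⊆ Ici 0 := by
    rw [Set.uIcc_of_le hxy]; exact fun t ht => hx.trans ht.1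
  have hFpos : ∀ t ∈ Set.uIcc x y, 0 < p - G t := fun t ht => sub_pos.2 (hGlt t (hsub ht))
  have hrint : IntervalIntegrable (fun t => G' t / (p - G t)) volume x y :=
    ((aux_rcont hderiv hG'cont hGlt).mono hsub).intervalIntegrable
  have hL : ∀ t ∈ Set.uIcc x y,
      HasDerivAt (fun u => Real.log (p - G u)) (-(G' t / (p - G t))) t := by
    intro t ht
    have h1 : HasDerivAt (fun u => p - G u) (-(G' t)) t := by
      exact ((hasDerivAt_const t p).sub (hderiv t (hsub ht))).congr_deriv (zero_sub _)
    have h2 := h1.log (hFpos t ht).ne'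
    convert h2 using 1
    field_simp
  have key := intervalIntegral.integral_eq_sub_of_hasDerivAt hL hrint.neg
  rw [intervalIntegral.integral_neg] at key
  have hFy : 0 < p - G y := hFpos y Set.right_mem_uIcc
  have hFx : 0 < p - G x := hFpos x Set.left_mem_uIcc
  have : Real.log (p - G y) = Real.log (p - G x) + (-(∫ t in x..y, G' t / (p - G t))) := by
    linarith
  calc p - G y = Real.exp (Real.log (p - G y)) := (Real.exp_log hFy).symm
    _ = Real.exp (Real.log (p - G x)) * Real.exp (-(∫ t in x..y, G' t / (p - G t))) := by
        rw [this, Real.exp_add]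
    _ = (p - G x) * Real.exp (-(∫ t in x..y, G' t / (p - G t))) := by
        rw [Real.exp_log hFx]

lemma aux_R_cmp {p : ℝ} {G G' : ℝ → ℝ}
    (hderiv : ∀ x ∈ Ici (0:ℝ), HasDerivAt G (G' x) x)
    (hG'cont : ContinuousOn G' (Ici 0))
    (hGlt : ∀ x ∈ Ici (0:ℝ), G x < p)
    {a b t : ℝ} (ha : 0 ≤ a) (hab : a ≤ b) (hat : a ≤ t)
    (hptw : ∀ u ∈ Icc (0:ℝ) (t - a),
      G' (u + a) / (p - G (u + a)) ≤ G' (u + b) / (p - G (u + b))) :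
    (∫ u in a..t, G' u / (p - G u)) ≤ ∫ u in b..(t + (b - a)), G' u / (p - G u) := by
  set r := fun u => G' u / (p - G u) with hr
  have hrc := aux_rcont hderiv hG'cont (G' := G') hGlt
  have e1 : (∫ u in (0:ℝ)..(t - a), r (u + a)) = ∫ u in a..t, r u := by
    rw [intervalIntegral.integral_comp_add_right, zero_add, sub_add_cancel]
  have e2 : (∫ u in (0:ℝ)..(t - a), r (u + b)) = ∫ u in b..(t + (b - a)), r u := by
    rw [intervalIntegral.integral_comp_add_right, zero_add,
      show t - a + b = t + (b - a) by ring]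
  rw [← e1, ← e2]
  have hmaps : ∀ c : ℝ, 0 ≤ c → ∀ u ∈ Set.uIcc (0:ℝ) (t - a), u + c ∈ Ici (0:ℝ) := by
    intro c hc u hu
    rw [Set.uIcc_of_le (by linarith)] at hu
    have := hu.1
    simp only [Set.mem_Ici]
    linarith
  have hint1 : IntervalIntegrable (fun u => r (u + a)) volume 0 (t - a) :=
    (hrc.comp ((continuous_id.add continuous_const).continuousOn) (hmaps a ha)).intervalIntegrable
  have hint2 : IntervalIntegrable (fun u => r (u + b)) volume 0 (t - a) :=
    (hrc.comp ((continuous_id.add continuous_const).continuousOn)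
      (hmaps b (ha.trans hab))).intervalIntegrable
  exact intervalIntegral.integral_mono_on (by linarith) hint1 hint2 hptw

lemma aux_R_cmp' {p : ℝ} {G G' : ℝ → ℝ}
    (hderiv : ∀ x ∈ Ici (0:ℝ), HasDerivAt G (G' x) x)
    (hG'cont : ContinuousOn G' (Ici 0))
    (hGlt : ∀ x ∈ Ici (0:ℝ), G x < p)
    {a b t : ℝ} (ha : 0 ≤ a) (hab : a ≤ b) (hat : a ≤ t)
    (hptw : ∀ u ∈ Icc (0:ℝ) (t - a),
      G' (u + b) / (p - G (u + b)) ≤ G' (u + a) / (p - G (u + a))) :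
    (∫ u in b..(t + (b - a)), G' u / (p - G u)) ≤ ∫ u in a..t, G' u / (p - G u) := by
  set r := fun u => G' u / (p - G u) with hr
  have hrc := aux_rcont hderiv hG'cont (G' := G') hGlt
  have e1 : (∫ u in (0:ℝ)..(t - a), r (u + a)) = ∫ u in a..t, r u := by
    rw [intervalIntegral.integral_comp_add_right, zero_add, sub_add_cancel]
  have e2 : (∫ u in (0:ℝ)..(t - a), r (u + b)) = ∫ u in b..(t + (b - a)), r u := by
    rw [intervalIntegral.integral_comp_add_right, zero_add,
      show t - a + b = t + (b - a) by ring]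
  rw [← e1, ← e2]

  have hmaps : ∀ c : ℝ, 0 ≤ c → ∀ u ∈ Set.uIcc (0:ℝ) (t - a), u + c ∈ Ici (0:ℝ) := by
    intro c hc u hu
    rw [Set.uIcc_of_le (by linarith)] at hu
    have := hu.1
    simp only [Set.mem_Ici]
    linarith
  have hint1 : IntervalIntegrable (fun u => r (u + a)) volume 0 (t - a) :=
    (hrc.comp ((continuous_id.add continuous_const).continuousOn) (hmaps a ha)).intervalIntegrable
  have hint2 : IntervalIntegrable (fun u => r (u + b)) volume 0 (t - a) :=
    (hrc.comp ((continuous_id.add continuous_const).continuousOn)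
      (hmaps b (ha.trans hab))).intervalIntegrable
  exact intervalIntegral.integral_mono_on (by linarith) hint2 hint1 hptw

lemma aux_cmp_le {p : ℝ} {G G' : ℝ → ℝ}
    (hderiv : ∀ x ∈ Ici (0:ℝ), HasDerivAt G (G' x) x)
    (hG'cont : ContinuousOn G' (Ici 0))
    (hGlt : ∀ x ∈ Ici (0:ℝ), G x < p)
    (hr : MonotoneOn (fun x => G' x / (p - G x)) (Ici 0))
    {a b t : ℝ} (ha : 0 ≤ a) (hab : a ≤ b) (hat : a ≤ t) :
    (p - G (t + (b - a))) * (p - G a) ≤ (p - G t) * (p - G b) := by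
  have hb : (0:ℝ) ≤ b := ha.trans hab
  have h1 : p - G t = (p - G a) * Real.exp (-(∫ u in a..t, G' u / (p - G u))) :=
    aux_surv hderiv hG'cont hGlt ha hat
  have h2 : p - G (t + (b - a)) =
      (p - G b) * Real.exp (-(∫ u in b..(t + (b - a)), G' u / (p - G u))) :=
    aux_surv hderiv hG'cont hGlt hb (by linarith)
  have hR : (∫ u in a..t, G' u / (p - G u)) ≤ ∫ u in b..(t + (b - a)), G' u / (p - G u) := by
    refine aux_R_cmp hderiv hG'cont hGlt ha hab hat ?_
    intro u hu
    exact hr (by simp; linarith [hu.1]) (by simp; linarith [hu.1]) (by linarith)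
  have hexp : Real.exp (-(∫ u in b..(t + (b - a)), G' u / (p - G u)))
      ≤ Real.exp (-(∫ u in a..t, G' u / (p - G u))) := Real.exp_le_exp.2 (by linarith)
  have hFa : (0:ℝ) < p - G a := sub_pos.2 (hGlt a ha)
  have hFb : (0:ℝ) < p - G b := sub_pos.2 (hGlt b hb)
  calc (p - G (t + (b - a))) * (p - G a)
      = Real.exp (-(∫ u in b..(t + (b - a)), G' u / (p - G u))) * ((p - G a) * (p - G b)) := by
        rw [h2]; ring
    _ ≤ Real.exp (-(∫ u in a..t, G' u / (p - G u))) * ((p - G a) * (p - G b)) :=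
        mul_le_mul_of_nonneg_right hexp (by positivity)
    _ = (p - G t) * (p - G b) := by rw [h1]; ring

lemma aux_cmp_ge {p : ℝ} {G G' : ℝ → ℝ}
    (hderiv : ∀ x ∈ Ici (0:ℝ), HasDerivAt G (G' x) x)
    (hG'cont : ContinuousOn G' (Ici 0))
    (hGlt : ∀ x ∈ Ici (0:ℝ), G x < p)
    (hr : AntitoneOn (fun x => G' x / (p - G x)) (Ici 0))
    {a b t : ℝ} (ha : 0 ≤ a) (hab : a ≤ b) (hat : a ≤ t) :
    (p - G t) * (p - G b) ≤ (p - G (t + (b - a))) * (p - G a) := by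
  have hb : (0:ℝ) ≤ b := ha.trans hab
  have h1 : p - G t = (p - G a) * Real.exp (-(∫ u in a..t, G' u / (p - G u))) :=
    aux_surv hderiv hG'cont hGlt ha hat
  have h2 : p - G (t + (b - a)) =
      (p - G b) * Real.exp (-(∫ u in b..(t + (b - a)), G' u / (p - G u))) :=
    aux_surv hderiv hG'cont hGlt hb (by linarith)
  have hR : (∫ u in b..(t + (b - a)), G' u / (p - G u)) ≤ ∫ u in a..t, G' u / (p - G u) := by
    refine aux_R_cmp' hderiv hG'cont hGlt ha hab hat ?_
    intro u hu
    exact hr (by simp; linarith [hu.1]) (by simp; linarith [hu.1]) (by linarith)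
  have hexp : Real.exp (-(∫ u in a..t, G' u / (p - G u)))
      ≤ Real.exp (-(∫ u in b..(t + (b - a)), G' u / (p - G u))) := Real.exp_le_exp.2 (by linarith)
  have hFa : (0:ℝ) < p - G a := sub_pos.2 (hGlt a ha)
  have hFb : (0:ℝ) < p - G b := sub_pos.2 (hGlt b hb)
  calc (p - G t) * (p - G b)
      = Real.exp (-(∫ u in a..t, G' u / (p - G u))) * ((p - G a) * (p - G b)) := by
        rw [h1]; ring
    _ ≤ Real.exp (-(∫ u in b..(t + (b - a)), G' u / (p - G u))) * ((p - G a) * (p - G b)) :=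
        mul_le_mul_of_nonneg_right hexp (by positivity)
    _ = (p - G (t + (b - a))) * (p - G a) := by rw [h2]; ring

lemma aux_FTC_G {G G' : ℝ → ℝ}
    (hderiv : ∀ x ∈ Ici (0:ℝ), HasDerivAt G (G' x) x)
    (hG'cont : ContinuousOn G' (Ici 0))
    {x b : ℝ} (hx : 0 ≤ x) (hb : x ≤ b) :
    (∫ u in x..b, G' u) = G b - G x := by
  have hsub : Set.uIcc x b ⊆ Ici 0 := by
    rw [Set.uIcc_of_le hb]; exact fun t ht => hx.trans ht.1
  exact intervalIntegral.integral_eq_sub_of_hasDerivAt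
    (fun t ht => hderiv t (hsub ht)) ((hG'cont.mono hsub).intervalIntegrable)

lemma aux_tail_le {p θ : ℝ} {G G' : ℝ → ℝ} (hθ : 0 < θ)
    (hderiv : ∀ x ∈ Ici (0:ℝ), HasDerivAt G (G' x) x)
    (hG'cont : ContinuousOn G' (Ici 0))
    (hmono : MonotoneOn G (Ici 0))
    (hGlim : Filter.Tendsto G Filter.atTop (nhds p))
    (hint : IntegrableOn (fun y => Real.exp (θ * y) * G' y) (Set.Ici 0))
    {x : ℝ} (hx : 0 ≤ x) :
    Real.exp (θ * x) * (p - G x) ≤ ∫ y in Set.Ioi x, Real.exp (θ * y) * G' y := by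
  have hG'nn : ∀ y, 0 ≤ y → 0 ≤ G' y := fun y hy => aux_G'_nonneg hderiv hmono hy
  have key : ∀ b, x ≤ b →
      Real.exp (θ * x) * (G b - G x) ≤ ∫ y in Set.Ioi x, Real.exp (θ * y) * G' y := by
    intro b hb
    have hsub : Set.uIcc x b ⊆ Ici 0 := by
      rw [Set.uIcc_of_le hb]; exact fun t ht => hx.trans ht.1
    have int1 : IntervalIntegrable (fun u => Real.exp (θ * x) * G' u) volume x b :=
      ((continuousOn_const.mul (hG'cont.mono hsub))).intervalIntegrable
    have int2 : IntervalIntegrable (fun u => Real.exp (θ * u) * G' u) volume x b :=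
      (((Real.continuous_exp.comp (continuous_const.mul continuous_id)).continuousOn.mul
        (hG'cont.mono hsub))).intervalIntegrable
    calc Real.exp (θ * x) * (G b - G x) = ∫ u in x..b, Real.exp (θ * x) * G' u := by
          rw [intervalIntegral.integral_const_mul, aux_FTC_G hderiv hG'cont hx hb]
      _ ≤ ∫ u in x..b, Real.exp (θ * u) * G' u := by
          refine intervalIntegral.integral_mono_on hb int1 int2 fun u hu => ?_
          have h1 : 0 ≤ G' u := hG'nn u (hx.trans hu.1)
          exact mul_le_mul_of_nonneg_right
            (Real.exp_le_exp.2 (by nlinarith [hu.1])) h1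
      _ = ∫ u in Set.Ioc x b, Real.exp (θ * u) * G' u := intervalIntegral.integral_of_le hb
      _ ≤ ∫ y in Set.Ioi x, Real.exp (θ * y) * G' y := by
          refine setIntegral_mono_set
            (hint.mono_set (fun y hy => le_of_lt (lt_of_le_of_lt hx hy))) ?_
            (Set.Ioc_subset_Ioi_self.eventuallyLE)
          refine (ae_restrict_iff' measurableSet_Ioi).2 (ae_of_all _ fun y hy => ?_)
          exact mul_nonneg (Real.exp_pos _).le (hG'nn y (hx.trans hy.le))
  have hten : Filter.Tendsto (fun b => Real.exp (θ * x) * (G b - G x)) Filter.atTop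
      (nhds (Real.exp (θ * x) * (p - G x))) :=
    ((hGlim.sub_const (G x)).const_mul _)
  exact le_of_tendsto hten ((Filter.eventually_ge_atTop x).mono key)

lemma aux_T_tendsto {θ : ℝ} {f : ℝ → ℝ}
    (hint : IntegrableOn f (Set.Ici 0)) :
    Filter.Tendsto (fun b => ∫ y in Set.Ioi b, f y) Filter.atTop (nhds 0) := by
  have hint0 : IntegrableOn f (Set.Ioi 0) := hint.mono_set Set.Ioi_subset_Ici_self
  have h1 : Filter.Tendsto (fun b => ∫ y in (0:ℝ)..b, f y) Filter.atTop
      (nhds (∫ y in Set.Ioi 0, f y)) :=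
    intervalIntegral_tendsto_integral_Ioi 0 hint0 Filter.tendsto_id
  have h2 : Filter.Tendsto (fun b => (∫ y in Set.Ioi 0, f y) - ∫ y in (0:ℝ)..b, f y)
      Filter.atTop (nhds 0) := by
    simpa using ((tendsto_const_nhds (x := ∫ y in Set.Ioi 0, f y)).sub h1)
  refine h2.congr' ?_
  filter_upwards [Filter.eventually_ge_atTop (0:ℝ)] with b hb
  have hsplit : (∫ y in Set.Ioc 0 b, f y) + (∫ y in Set.Ioi b, f y)
      = ∫ y in Set.Ioi 0, f y := by
    rw [← setIntegral_union (Set.Ioc_disjoint_Ioi le_rfl) measurableSet_Ioi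
      (hint0.mono_set Set.Ioc_subset_Ioi_self)
      (hint0.mono_set (fun y hy => lt_of_le_of_lt hb hy)),
      Set.Ioc_union_Ioi_eq_Ioi hb]
  rw [intervalIntegral.integral_of_le hb]
  linarith

lemma aux_ibp {p θ : ℝ} {G G' : ℝ → ℝ} (hθ : 0 < θ)
    (hderiv : ∀ x ∈ Ici (0:ℝ), HasDerivAt G (G' x) x)
    (hG'cont : ContinuousOn G' (Ici 0))
    (hmono : MonotoneOn G (Ici 0))
    (hGlt : ∀ x ∈ Ici (0:ℝ), G x < p)
    (hGlim : Filter.Tendsto G Filter.atTop (nhds p))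
    (hint : IntegrableOn (fun y => Real.exp (θ * y) * G' y) (Set.Ici 0))
    {x : ℝ} (hx : 0 ≤ x) :
    IntegrableOn (fun y => Real.exp (θ * y) * (p - G y)) (Set.Ioi x) ∧
    (∫ y in Set.Ioi x, Real.exp (θ * y) * G' y) =
      Real.exp (θ * x) * (p - G x) +
        θ * ∫ y in Set.Ioi x, Real.exp (θ * y) * (p - G y) := by
  set f : ℝ → ℝ := fun y => Real.exp (θ * y) * G' y with hf
  set g : ℝ → ℝ := fun y => Real.exp (θ * y) * (p - G y) with hg
  have hGcont : ContinuousOn G (Ici 0) := fun t ht =>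
    (hderiv t ht).continuousAt.continuousWithinAt
  have hecont : Continuous (fun y : ℝ => Real.exp (θ * y)) :=
    Real.continuous_exp.comp (continuous_const.mul continuous_id)
  have hgcont : ContinuousOn g (Ici 0) :=
    hecont.continuousOn.mul (continuousOn_const.sub hGcont)
  have hfcont : ContinuousOn f (Ici 0) := hecont.continuousOn.mul hG'cont
  -- derivative of -(g y)
  have hH : ∀ y ∈ Ici (0:ℝ),
      HasDerivAt (fun y => -(Real.exp (θ * y) * (p - G y))) (f y - θ * g y) y := by
    intro y hy
    have h1 : HasDerivAt (fun y : ℝ => Real.exp (θ * y)) (Real.exp (θ * y) * θ) y := by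
      simpa using ((hasDerivAt_id y).const_mul θ).exp
    have h2 : HasDerivAt (fun y => p - G y) (-(G' y)) y := by
      exact ((hasDerivAt_const y p).sub (hderiv y hy)).congr_deriv (zero_sub _)
    have h3 : HasDerivAt (fun y => -(Real.exp (θ * y) * (p - G y)))
        (-(Real.exp (θ * y) * θ * (p - G y) + Real.exp (θ * y) * -(G' y))) y := (h1.mul h2).neg
    convert h3 using 1
    simp only [hf, hg]
    ring
  -- finite interval IBP
  have hEq : ∀ b, x ≤ b → θ * (∫ y in x..b, g y) = (∫ y in x..b, f y) - g x + g b := by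
    intro b hb
    have hsub : Set.uIcc x b ⊆ Ici 0 := by
      rw [Set.uIcc_of_le hb]; exact fun t ht => hx.trans ht.1
    have intf : IntervalIntegrable f volume x b := (hfcont.mono hsub).intervalIntegrable
    have intg : IntervalIntegrable g volume x b := (hgcont.mono hsub).intervalIntegrable
    have key := intervalIntegral.integral_eq_sub_of_hasDerivAt
      (f := fun y => -(Real.exp (θ * y) * (p - G y))) (f' := fun y => f y - θ * g y)
      (fun t ht => hH t (hsub ht)) (intf.sub (intg.const_mul θ))
    rw [intervalIntegral.integral_sub intf (intg.const_mul θ),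
      intervalIntegral.integral_const_mul] at key
    have : -(Real.exp (θ * b) * (p - G b)) - -(Real.exp (θ * x) * (p - G x)) = g x - g b := by
      simp only [hg]; ring
    rw [this] at key
    linarith
  -- limits
  have hTten : Filter.Tendsto (fun b => ∫ y in x..b, f y) Filter.atTop
      (nhds (∫ y in Set.Ioi x, f y)) :=
    intervalIntegral_tendsto_integral_Ioi x
      (hint.mono_set (fun y hy => hx.trans (le_of_lt hy))) Filter.tendsto_id
  have hgten : Filter.Tendsto g Filter.atTop (nhds 0) := by
    have hTz : Filter.Tendsto (fun b => ∫ y in Set.Ioi b, f y) Filter.atTop (nhds 0) :=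
      aux_T_tendsto (θ := θ) hint
    refine squeeze_zero' ?_ ?_ hTz
    · filter_upwards [Filter.eventually_ge_atTop (0:ℝ)] with b hb
      exact mul_nonneg (Real.exp_pos _).le (sub_pos.2 (hGlt b hb)).le
    · filter_upwards [Filter.eventually_ge_atTop (0:ℝ)] with b hb
      exact aux_tail_le hθ hderiv hG'cont hmono hGlim hint hb
  have hφten : Filter.Tendsto (fun b => ∫ y in x..b, g y) Filter.atTop
      (nhds (((∫ y in Set.Ioi x, f y) - g x + 0) / θ)) := by
    have h1 : Filter.Tendsto (fun b => ((∫ y in x..b, f y) - g x + g b) / θ) Filter.atTop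
        (nhds (((∫ y in Set.Ioi x, f y) - g x + 0) / θ)) :=
      (((hTten.sub_const (g x)).add hgten).div_const θ)
    refine h1.congr' ?_
    filter_upwards [Filter.eventually_ge_atTop x] with b hb
    rw [← hEq b hb, mul_div_cancel_left₀ _ hθ.ne']
  -- nonnegativity of g on [x, ∞)
  have hgnn : ∀ y, x ≤ y → 0 ≤ g y := fun y hy =>
    mul_nonneg (Real.exp_pos _).le (sub_pos.2 (hGlt y (hx.trans hy))).le
  have hKint : IntegrableOn g (Set.Ioi x) := by
    refine integrableOn_Ioi_of_intervalIntegral_norm_tendsto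
      (((∫ y in Set.Ioi x, f y) - g x + 0) / θ) x (fun i => ?_) Filter.tendsto_id ?_
    · simp only [id_eq]
      rcases le_or_gt x i with hi | hi
      · have hsub : Set.uIcc x i ⊆ Ici 0 := by
          rw [Set.uIcc_of_le hi]; exact fun t ht => hx.trans ht.1
        exact ((hgcont.mono hsub).intervalIntegrable).1
      · rw [Set.Ioc_eq_empty (not_lt.2 hi.le)]
        exact integrableOn_empty
    · refine hφten.congr' ?_
      filter_upwards [Filter.eventually_ge_atTop x] with b hb
      refine intervalIntegral.integral_congr fun y hy => ?_
      rw [Set.uIcc_of_le hb] at hy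
      exact (Real.norm_of_nonneg (hgnn y hy.1)).symm
  have hKval : (∫ y in Set.Ioi x, g y) = ((∫ y in Set.Ioi x, f y) - g x + 0) / θ :=
    tendsto_nhds_unique (intervalIntegral_tendsto_integral_Ioi x hKint Filter.tendsto_id) hφten
  refine ⟨hKint, ?_⟩
  have hgx : g x = Real.exp (θ * x) * (p - G x) := rfl
  rw [show (∫ y in Set.Ioi x, Real.exp (θ * y) * (p - G y)) = ∫ y in Set.Ioi x, g y from rfl,
    hKval]
  field_simp
  rw [hgx]; ring

lemma aux_shift_pre (c b : ℝ) : (fun x : ℝ => x + c) ⁻¹' Set.Ioi b = Set.Ioi (b - c) := by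
  ext z
  simp only [Set.mem_preimage, Set.mem_Ioi]
  constructor <;> intro h <;> linarith

lemma aux_shift_int (g : ℝ → ℝ) (c b : ℝ) :
    (∫ t in Set.Ioi (b - c), g (t + c)) = ∫ y in Set.Ioi b, g y := by
  have hemb : MeasurableEmbedding (fun x : ℝ => x + c) :=
    (Homeomorph.addRight c).measurableEmbedding
  have h := (measurePreserving_add_right volume c).setIntegral_preimage_emb hemb g (Set.Ioi b)
  rwa [aux_shift_pre] at h

lemma aux_shift_intble {g : ℝ → ℝ} {c b : ℝ} (h : IntegrableOn g (Set.Ioi b)) :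
    IntegrableOn (fun t => g (t + c)) (Set.Ioi (b - c)) := by
  have hemb : MeasurableEmbedding (fun x : ℝ => x + c) :=
    (Homeomorph.addRight c).measurableEmbedding
  have h2 := ((measurePreserving_add_right volume c).integrableOn_comp_preimage hemb
      (f := g) (s := Set.Ioi b)).2 h
  rwa [aux_shift_pre] at h2

lemma aux_KD {p θ : ℝ} {G : ℝ → ℝ}
    (hGlt : ∀ x ∈ Ici (0:ℝ), G x < p)
    {a b : ℝ} (ha : 0 ≤ a) (hab : a ≤ b)
    (hKa : IntegrableOn (fun y => Real.exp (θ * y) * (p - G y)) (Set.Ioi a))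
    (hKb : IntegrableOn (fun y => Real.exp (θ * y) * (p - G y)) (Set.Ioi b))
    (hcmp : ∀ t, a < t → (p - G (t + (b - a))) * (p - G a) ≤ (p - G t) * (p - G b)) :
    (∫ y in Set.Ioi b, Real.exp (θ * y) * (p - G y)) * (Real.exp (θ * a) * (p - G a)) ≤
      (∫ y in Set.Ioi a, Real.exp (θ * y) * (p - G y)) * (Real.exp (θ * b) * (p - G b)) := by
  set g : ℝ → ℝ := fun y => Real.exp (θ * y) * (p - G y) with hg
  set c : ℝ := b - a with hc
  have hba : b - c = a := by rw [hc]; ring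
  have hshift : (∫ y in Set.Ioi b, g y) = ∫ t in Set.Ioi a, g (t + c) := by
    rw [← aux_shift_int g c b, hba]
  have hintb' : IntegrableOn (fun t => g (t + c)) (Set.Ioi a) := by
    have := aux_shift_intble (c := c) hKb
    rwa [hba] at this
  have hptw : ∀ t ∈ Set.Ioi a,
      g (t + c) * (Real.exp (θ * a) * (p - G a)) ≤ g t * (Real.exp (θ * b) * (p - G b)) := by
    intro t ht
    have ht' : a < t := ht
    have h1 : Real.exp (θ * (t + c)) * Real.exp (θ * a) = Real.exp (θ * t) * Real.exp (θ * b) := by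
      rw [← Real.exp_add, ← Real.exp_add]
      congr 1
      rw [hc]; ring
    have h2 := hcmp t ht'
    calc g (t + c) * (Real.exp (θ * a) * (p - G a))
        = (Real.exp (θ * (t + c)) * Real.exp (θ * a)) * ((p - G (t + c)) * (p - G a)) := by
          simp only [hg]; ring
      _ = (Real.exp (θ * t) * Real.exp (θ * b)) * ((p - G (t + c)) * (p - G a)) := by rw [h1]
      _ ≤ (Real.exp (θ * t) * Real.exp (θ * b)) * ((p - G t) * (p - G b)) := by
          exact mul_le_mul_of_nonneg_left h2 (by positivity)
      _ = g t * (Real.exp (θ * b) * (p - G b)) := by simp only [hg]; ring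
  calc (∫ y in Set.Ioi b, g y) * (Real.exp (θ * a) * (p - G a))
      = ∫ t in Set.Ioi a, g (t + c) * (Real.exp (θ * a) * (p - G a)) := by
        rw [hshift, ← integral_mul_const]
    _ ≤ ∫ t in Set.Ioi a, g t * (Real.exp (θ * b) * (p - G b)) :=
        setIntegral_mono_on (hintb'.mul_const _) (hKa.mul_const _) measurableSet_Ioi hptw
    _ = (∫ y in Set.Ioi a, g y) * (Real.exp (θ * b) * (p - G b)) := integral_mul_const _ _

lemma aux_KD' {p θ : ℝ} {G : ℝ → ℝ}
    (hGlt : ∀ x ∈ Ici (0:ℝ), G x < p)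
    {a b : ℝ} (ha : 0 ≤ a) (hab : a ≤ b)
    (hKa : IntegrableOn (fun y => Real.exp (θ * y) * (p - G y)) (Set.Ioi a))
    (hKb : IntegrableOn (fun y => Real.exp (θ * y) * (p - G y)) (Set.Ioi b))
    (hcmp : ∀ t, a < t → (p - G t) * (p - G b) ≤ (p - G (t + (b - a))) * (p - G a)) :
    (∫ y in Set.Ioi a, Real.exp (θ * y) * (p - G y)) * (Real.exp (θ * b) * (p - G b)) ≤
      (∫ y in Set.Ioi b, Real.exp (θ * y) * (p - G y)) * (Real.exp (θ * a) * (p - G a)) := by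
  set g : ℝ → ℝ := fun y => Real.exp (θ * y) * (p - G y) with hg
  set c : ℝ := b - a with hc
  have hba : b - c = a := by rw [hc]; ring
  have hshift : (∫ y in Set.Ioi b, g y) = ∫ t in Set.Ioi a, g (t + c) := by
    rw [← aux_shift_int g c b, hba]
  have hintb' : IntegrableOn (fun t => g (t + c)) (Set.Ioi a) := by
    have := aux_shift_intble (c := c) hKb
    rwa [hba] at this
  have hptw : ∀ t ∈ Set.Ioi a,
      g t * (Real.exp (θ * b) * (p - G b)) ≤ g (t + c) * (Real.exp (θ * a) * (p - G a)) := by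
    intro t ht
    have ht' : a < t := ht
    have h1 : Real.exp (θ * (t + c)) * Real.exp (θ * a) = Real.exp (θ * t) * Real.exp (θ * b) := by
      rw [← Real.exp_add, ← Real.exp_add]
      congr 1
      rw [hc]; ring
    have h2 := hcmp t ht'
    calc g t * (Real.exp (θ * b) * (p - G b))
        = (Real.exp (θ * t) * Real.exp (θ * b)) * ((p - G t) * (p - G b)) := by
          simp only [hg]; ring
      _ ≤ (Real.exp (θ * t) * Real.exp (θ * b)) * ((p - G (t + c)) * (p - G a)) := by
          exact mul_le_mul_of_nonneg_left h2 (by positivity)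
      _ = (Real.exp (θ * (t + c)) * Real.exp (θ * a)) * ((p - G (t + c)) * (p - G a)) := by
          rw [h1]
      _ = g (t + c) * (Real.exp (θ * a) * (p - G a)) := by simp only [hg]; ring
  calc (∫ y in Set.Ioi a, g y) * (Real.exp (θ * b) * (p - G b))
      = ∫ t in Set.Ioi a, g t * (Real.exp (θ * b) * (p - G b)) := (integral_mul_const _ _).symm
    _ ≤ ∫ t in Set.Ioi a, g (t + c) * (Real.exp (θ * a) * (p - G a)) :=
        setIntegral_mono_on (hKa.mul_const _) (hintb'.mul_const _) measurableSet_Ioi hptw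
    _ = (∫ y in Set.Ioi b, g y) * (Real.exp (θ * a) * (p - G a)) := by
        rw [hshift, ← integral_mul_const]

end IfrDfrAux

/-- If the failure rate `r(x) = G′(x)/(p − G(x))` is nondecreasing on `[0,∞)` then the ratio
`f(x) = (∫ₓ^∞ e^{θy} G′(y) dy)/(e^{θx}(p − G(x)))` is nonincreasing on `[0,∞)`, and hence
`f(x) ≤ f(0)` for all `x ≥ 0`; if `r` is nonincreasing then `f` is nondecreasing and
`f(0) ≤ f(x)` for all `x ≥ 0`. -/
theorem ifr_dfr_monotonicity_of_ratio
    (p θ : ℝ) (hp : 0 < p) (hθ : 0 < θ)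
    (G G' : ℝ → ℝ)
    (hderiv : ∀ x ∈ Set.Ici (0 : ℝ), HasDerivAt G (G' x) x)
    (hG'cont : ContinuousOn G' (Set.Ici 0))
    (hmono : MonotoneOn G (Set.Ici 0))
    (hG0 : G 0 = 0)
    (hGlt : ∀ x ∈ Set.Ici (0 : ℝ), G x < p)
    (hGlim : Filter.Tendsto G Filter.atTop (nhds p))
    (hint : IntegrableOn (fun y => Real.exp (θ * y) * G' y) (Set.Ici 0)) :
    (MonotoneOn (fun x => G' x / (p - G x)) (Set.Ici 0) →
      AntitoneOn (fun x =>
        (∫ y in Set.Ioi x, Real.exp (θ * y) * G' y) / (Real.exp (θ * x) * (p - G x)))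
        (Set.Ici 0) ∧
      ∀ x ∈ Set.Ici (0 : ℝ),
        (∫ y in Set.Ioi x, Real.exp (θ * y) * G' y) / (Real.exp (θ * x) * (p - G x))
          ≤ (∫ y in Set.Ioi (0 : ℝ), Real.exp (θ * y) * G' y)
              / (Real.exp (θ * 0) * (p - G 0))) ∧
    (AntitoneOn (fun x => G' x / (p - G x)) (Set.Ici 0) →
      MonotoneOn (fun x =>
        (∫ y in Set.Ioi x, Real.exp (θ * y) * G' y) / (Real.exp (θ * x) * (p - G x)))
        (Set.Ici 0) ∧
      ∀ x ∈ Set.Ici (0 : ℝ),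
        (∫ y in Set.Ioi (0 : ℝ), Real.exp (θ * y) * G' y) / (Real.exp (θ * 0) * (p - G 0))
          ≤ (∫ y in Set.Ioi x, Real.exp (θ * y) * G' y) / (Real.exp (θ * x) * (p - G x))) := by
  have hD : ∀ x, 0 ≤ x → 0 < Real.exp (θ * x) * (p - G x) := fun x hx =>
    mul_pos (Real.exp_pos _) (sub_pos.2 (hGlt x hx))
  -- rewrite f x = 1 + θ * (K x / D x)
  have hfeq : ∀ x, 0 ≤ x →
      (∫ y in Set.Ioi x, Real.exp (θ * y) * G' y) / (Real.exp (θ * x) * (p - G x)) =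
      1 + θ * ((∫ y in Set.Ioi x, Real.exp (θ * y) * (p - G y)) /
        (Real.exp (θ * x) * (p - G x))) := by
    intro x hx
    obtain ⟨_, hT⟩ := aux_ibp hθ hderiv hG'cont hmono hGlt hGlim hint hx
    rw [hT, add_div, div_self (hD x hx).ne', mul_div_assoc]
  constructor
  · intro hr
    have hanti : AntitoneOn (fun x =>
        (∫ y in Set.Ioi x, Real.exp (θ * y) * G' y) / (Real.exp (θ * x) * (p - G x)))
        (Set.Ici 0) := by
      intro a ha b hb hab
      have ha' : (0:ℝ) ≤ a := ha
      have hb' : (0:ℝ) ≤ b := hb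
      obtain ⟨hKa, _⟩ := aux_ibp hθ hderiv hG'cont hmono hGlt hGlim hint ha'
      obtain ⟨hKb, _⟩ := aux_ibp hθ hderiv hG'cont hmono hGlt hGlim hint hb'
      have hKD := aux_KD hGlt ha' hab hKa hKb
        (fun t ht => aux_cmp_le hderiv hG'cont hGlt hr ha' hab ht.le)
      have hQ : (∫ y in Set.Ioi b, Real.exp (θ * y) * (p - G y)) /
            (Real.exp (θ * b) * (p - G b)) ≤
          (∫ y in Set.Ioi a, Real.exp (θ * y) * (p - G y)) /
            (Real.exp (θ * a) * (p - G a)) :=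
        (div_le_div_iff₀ (hD b hb') (hD a ha')).2 hKD
      simp only []
      rw [hfeq a ha', hfeq b hb']
      have := mul_le_mul_of_nonneg_left hQ hθ.le
      linarith
    refine ⟨hanti, fun x hx => hanti (Set.self_mem_Ici) hx hx⟩
  · intro hr
    have hmono' : MonotoneOn (fun x =>
        (∫ y in Set.Ioi x, Real.exp (θ * y) * G' y) / (Real.exp (θ * x) * (p - G x)))
        (Set.Ici 0) := by
      intro a ha b hb hab
      have ha' : (0:ℝ) ≤ a := ha
      have hb' : (0:ℝ) ≤ b := hb
      obtain ⟨hKa, _⟩ := aux_ibp hθ hderiv hG'cont hmono hGlt hGlim hint ha'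
      obtain ⟨hKb, _⟩ := aux_ibp hθ hderiv hG'cont hmono hGlt hGlim hint hb'
      have hKD := aux_KD' hGlt ha' hab hKa hKb
        (fun t ht => aux_cmp_ge hderiv hG'cont hGlt hr ha' hab ht.le)
      have hQ : (∫ y in Set.Ioi a, Real.exp (θ * y) * (p - G y)) /
            (Real.exp (θ * a) * (p - G a)) ≤
          (∫ y in Set.Ioi b, Real.exp (θ * y) * (p - G y)) /
            (Real.exp (θ * b) * (p - G b)) :=
        (div_le_div_iff₀ (hD a ha') (hD b hb')).2 hKD
      simp only []
      rw [hfeq a ha', hfeq b hb']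
      have := mul_le_mul_of_nonneg_left hQ hθ.le
      linarith
    refine ⟨hmono', fun x hx => hmono' (Set.self_mem_Ici) hx hx⟩
end
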